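/- Let R be a commutative ring, S = R[x,y,z], and P⃗ = (P_x,P_y,P_z) ∈ S³. The antisymmetric biderivation on S determined by {x,y} = P_z, {y,z} = P_x, {z,x} = P_y satisfies the Jacobi identity (and hence is a Poisson bracket) if P⃗ · curl(P⃗) = 0, where curl(P⃗) = (∂P_z/∂y − ∂P_y/∂z, ∂P_x/∂z − ∂P_z/∂x, ∂P_y/∂x − ∂P_x/∂y). In particular, if P⃗ = grad(Q) for some Q ∈ S (the Jacobian bracket), the Jacobi identity holds. -/
import Mathlib


open MvPolynomial

/-- The antisymmetric biderivation on `R[x,y,z]` determined by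
`{x,y} = Pz`, `{y,z} = Px`, `{z,x} = Py`. -/
noncomputable def nambuBr {R : Type*} [CommRing R]
    (Px Py Pz f g : MvPolynomial (Fin 3) R) : MvPolynomial (Fin 3) R :=
  Px * (pderiv 1 f * pderiv 2 g - pderiv 2 f * pderiv 1 g)
    + Py * (pderiv 2 f * pderiv 0 g - pderiv 0 f * pderiv 2 g)
    + Pz * (pderiv 0 f * pderiv 1 g - pderiv 1 f * pderiv 0 g)

/-- Mixed partial derivatives commute. -/
lemma pdcomm {R : Type*} [CommRing R] (i j : Fin 3) (f : MvPolynomial (Fin 3) R) :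
    pderiv i (pderiv j f) = pderiv j (pderiv i f) := by
  induction f using MvPolynomial.induction_on with
  | C a => simp
  | add p q hp hq => simp [hp, hq]
  | mul_X p k hp =>
      have h2 : ∀ a b : Fin 3, pderiv a (pderiv b (X k : MvPolynomial (Fin 3) R)) = 0 := by
        intro a b
        rcases eq_or_ne k b with h | h
        · subst h; simp
        · simp [pderiv_X_of_ne h]
      simp only [pderiv_mul, map_add, hp, h2]
      ring

/-- The Jacobiator of the bracket equals minus `(P⃗ · curl P⃗)` times
the triple product `det(∇f, ∇g, ∇h)`. -/
lemma jacobi_eq {R : Type*} [CommRing R] (Px Py Pz f g h : MvPolynomial (Fin 3) R) :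
    nambuBr Px Py Pz f (nambuBr Px Py Pz g h)
      + nambuBr Px Py Pz g (nambuBr Px Py Pz h f)
      + nambuBr Px Py Pz h (nambuBr Px Py Pz f g) =
    -((Px * (pderiv 1 Pz - pderiv 2 Py) + Py * (pderiv 2 Px - pderiv 0 Pz)
        + Pz * (pderiv 0 Py - pderiv 1 Px)) *
      (pderiv 0 f * (pderiv 1 g * pderiv 2 h - pderiv 2 g * pderiv 1 h)
        - pderiv 1 f * (pderiv 0 g * pderiv 2 h - pderiv 2 g * pderiv 0 h)
        + pderiv 2 f * (pderiv 0 g * pderiv 1 h - pderiv 1 g * pderiv 0 h))) := by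
  simp only [nambuBr, pderiv_mul, map_add, map_sub]
  simp only [pdcomm 1 0, pdcomm 2 0, pdcomm 2 1]
  ring

/-- If `P⃗ · curl(P⃗) = 0` then the bracket `{x,y} = Pz`, `{y,z} = Px`,
`{z,x} = Py` (extended as an antisymmetric biderivation) satisfies the Jacobi identity,
hence is a Poisson bracket; in particular for `P⃗ = grad Q` (the Jacobian bracket)
the Jacobi identity holds. -/
theorem stmt8 {R : Type*} [CommRing R] (Px Py Pz : MvPolynomial (Fin 3) R)
    (hdot : Px * (pderiv 1 Pz - pderiv 2 Py) + Py * (pderiv 2 Px - pderiv 0 Pz)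
        + Pz * (pderiv 0 Py - pderiv 1 Px) = 0) :
    (∀ f g h : MvPolynomial (Fin 3) R,
      nambuBr Px Py Pz f (nambuBr Px Py Pz g h)
        + nambuBr Px Py Pz g (nambuBr Px Py Pz h f)
        + nambuBr Px Py Pz h (nambuBr Px Py Pz f g) = 0) ∧
    (∀ Q f g h : MvPolynomial (Fin 3) R,
      nambuBr (pderiv 0 Q) (pderiv 1 Q) (pderiv 2 Q) f
          (nambuBr (pderiv 0 Q) (pderiv 1 Q) (pderiv 2 Q) g h)
        + nambuBr (pderiv 0 Q) (pderiv 1 Q) (pderiv 2 Q) g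
          (nambuBr (pderiv 0 Q) (pderiv 1 Q) (pderiv 2 Q) h f)
        + nambuBr (pderiv 0 Q) (pderiv 1 Q) (pderiv 2 Q) h
          (nambuBr (pderiv 0 Q) (pderiv 1 Q) (pderiv 2 Q) f g) = 0) := by
  constructor
  · intro f g h
    rw [jacobi_eq, hdot, zero_mul, neg_zero]
  · intro Q f g h
    rw [jacobi_eq]
    have hgrad : pderiv 0 Q * (pderiv 1 (pderiv 2 Q) - pderiv 2 (pderiv 1 Q))
        + pderiv 1 Q * (pderiv 2 (pderiv 0 Q) - pderiv 0 (pderiv 2 Q))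
        + pderiv 2 Q * (pderiv 0 (pderiv 1 Q) - pderiv 1 (pderiv 0 Q)) = 0 := by
      simp only [pdcomm 1 0, pdcomm 2 0, pdcomm 2 1]
      ring
    rw [hgrad, zero_mul, neg_zero]
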